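/- For n ≥ 3, the square formed by the towers commutes: E_n ∘ F_n = ι ∘ E_{n−1}, where ι : TL_{n−1}(q) → TL_n(q) is the natural inclusion of the subalgebra generated by g_{σ_1},…,g_{σ_{n−1}} into the subalgebra generated by g_{σ_1},…,g_{σ_n}. -/

import Mathlib

open FreeAlgebra

/-- `V(x,y) = x y x + x y + y x + x + y + 1`. -/
def Vel {R : Type*} [Ring R] (x y : R) : R :=
  x * y * x + x * y + y * x + x + y + 1

/-- Defining relations of the affine Temperley–Lieb algebra `TL̂_{n+1}(q)` of type `Ã_n`.
Generators are indexed by `Fin (n+1)`: for `i < n` the index `i` stands for `g_{σ_{i+1}}`,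
and the index `n` (i.e. `Fin.last n`) stands for `g_{a_{n+1}}`.  For `n = 1` only the
quadratic relations remain, so `TLhat K q 1` is `TL̂_2(q)` (with generators
`t_{σ_1} = g 0` and `t_{a_2} = g 1`). -/
inductive ATLRel (K : Type*) [CommRing K] (q : K) (n : ℕ) :
    FreeAlgebra K (Fin (n + 1)) → FreeAlgebra K (Fin (n + 1)) → Prop
  | quad (i : Fin (n + 1)) :
      ATLRel K q n (ι K i * ι K i) ((q - 1) • ι K i + algebraMap K _ q)
  | comm_ss (i j : Fin (n + 1)) (hi : (i : ℕ) < n) (hj : (j : ℕ) < n)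
      (hd : 2 ≤ Nat.dist (i : ℕ) (j : ℕ)) :
      ATLRel K q n (ι K i * ι K j) (ι K j * ι K i)
  | comm_sa (hn : 2 ≤ n) (i : Fin (n + 1)) (h1 : 1 ≤ (i : ℕ)) (h2 : (i : ℕ) + 2 ≤ n) :
      ATLRel K q n (ι K i * ι K (Fin.last n)) (ι K (Fin.last n) * ι K i)
  | braid_ss (i j : Fin (n + 1)) (hj : (j : ℕ) < n) (hij : (j : ℕ) = (i : ℕ) + 1) :
      ATLRel K q n (ι K i * ι K j * ι K i) (ι K j * ι K i * ι K j)
  | braid_sa (hn : 2 ≤ n) (i : Fin (n + 1)) (h : (i : ℕ) = 0 ∨ (i : ℕ) + 1 = n) :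
      ATLRel K q n (ι K i * ι K (Fin.last n) * ι K i)
        (ι K (Fin.last n) * ι K i * ι K (Fin.last n))
  | v_ss (i j : Fin (n + 1)) (hj : (j : ℕ) < n) (hij : (j : ℕ) = (i : ℕ) + 1) :
      ATLRel K q n (Vel (ι K i) (ι K j)) 0
  | v_s1a (hn : 2 ≤ n) (i : Fin (n + 1)) (hi : (i : ℕ) = 0) :
      ATLRel K q n (Vel (ι K i) (ι K (Fin.last n))) 0
  | v_sna (hn : 2 ≤ n) (i : Fin (n + 1)) (hi : (i : ℕ) + 1 = n) :
      ATLRel K q n (Vel (ι K i) (ι K (Fin.last n))) 0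

/-- The affine Temperley–Lieb algebra `TL̂_{n+1}(q)`. -/
abbrev TLhat (K : Type*) [CommRing K] (q : K) (n : ℕ) :=
  RingQuot (ATLRel K q n)

/-- Defining relations of the type `A` Temperley–Lieb algebra `TL_n(q)` with `n`
generators `g_{σ_1}, …, g_{σ_n}`; index `i : Fin n` stands for `g_{σ_{i+1}}`. -/
inductive TLARel (K : Type*) [CommRing K] (q : K) (n : ℕ) :
    FreeAlgebra K (Fin n) → FreeAlgebra K (Fin n) → Prop
  | quad (i : Fin n) :
      TLARel K q n (ι K i * ι K i) ((q - 1) • ι K i + algebraMap K _ q)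
  | comm (i j : Fin n) (hd : 2 ≤ Nat.dist (i : ℕ) (j : ℕ)) :
      TLARel K q n (ι K i * ι K j) (ι K j * ι K i)
  | braid (i j : Fin n) (hij : (j : ℕ) = (i : ℕ) + 1) :
      TLARel K q n (ι K i * ι K j * ι K i) (ι K j * ι K i * ι K j)
  | vrel (i j : Fin n) (hij : (j : ℕ) = (i : ℕ) + 1) :
      TLARel K q n (Vel (ι K i) (ι K j)) 0

/-- The Temperley–Lieb algebra `TL_n(q)` of type `A` (abstract presentation). -/
abbrev TLA (K : Type*) [CommRing K] (q : K) (n : ℕ) :=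
  RingQuot (TLARel K q n)

variable (K : Type*) [CommRing K] (q : K) (n : ℕ)

/-- The generator `g_i` of `TL̂_{n+1}(q)`. -/
noncomputable def gg (i : Fin (n + 1)) : TLhat K q n :=
  RingQuot.mkAlgHom K (ATLRel K q n) (ι K i)

/-- The inverse `q⁻¹ (g_i - (q-1))` of the generator `g_i` of `TL̂_{n+1}(q)`. -/
noncomputable def ggInv [Invertible q] (i : Fin (n + 1)) : TLhat K q n :=
  ⅟q • (gg K q n i - algebraMap K _ (q - 1))

/-- The generator `g_{σ_{i+1}}` of `TL_n(q)`. -/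
noncomputable def ga (i : Fin n) : TLA K q n :=
  RingQuot.mkAlgHom K (TLARel K q n) (ι K i)

/-- The inverse `q⁻¹ (g - (q-1))` of a generator of `TL_n(q)`. -/
noncomputable def gaInv [Invertible q] (i : Fin n) : TLA K q n :=
  ⅟q • (ga K q n i - algebraMap K _ (q - 1))

/-- The index of `g_{σ_n}` in `TL̂_{n+1}(q)`. -/
def sigmaTop : Fin (n + 1) := ⟨n - 1, Nat.lt_succ_of_le (Nat.sub_le n 1)⟩

/-- The index of `g_{σ_{n-1}}` in `TL̂_{n+1}(q)`. -/
def sigmaSub : Fin (n + 1) := ⟨n - 2, Nat.lt_succ_of_le (Nat.sub_le n 2)⟩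

/-- `F` is the canonical homomorphism `F_n : TL̂_n(q) → TL̂_{n+1}(q)`, determined by
`t_{σ_i} ↦ g_{σ_i}` for `1 ≤ i ≤ n-1` and `t_{a_n} ↦ g_{σ_n} g_{a_{n+1}} g_{σ_n}⁻¹`. -/
def IsF [Invertible q] (F : TLhat K q (n - 1) →ₐ[K] TLhat K q n) : Prop :=
  (∀ i : Fin (n - 1 + 1), (i : ℕ) < n - 1 →
      F (gg K q (n - 1) i) =
        gg K q n (Fin.castLE (Nat.succ_le_succ (Nat.sub_le n 1)) i)) ∧
  F (gg K q (n - 1) (Fin.last (n - 1))) =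
    gg K q n (sigmaTop n) * gg K q n (Fin.last n) * ggInv K q n (sigmaTop n)

/-- Markov elements: `A g_{σ_n}^ε B` with `A, B` in the image of `F_n` and `ε ∈ {0,1}`. -/
def IsMarkov [Invertible q] (F : TLhat K q (n - 1) →ₐ[K] TLhat K q n)
    (x : TLhat K q n) : Prop :=
  ∃ A B : TLhat K q (n - 1), ∃ ε : ℕ, ε ≤ 1 ∧
    x = F A * gg K q n (sigmaTop n) ^ ε * F B

/-- A trace on a `K`-algebra `R`: a `K`-linear map with `τ(xy) = τ(yx)`. -/
def IsTrace {R : Type*} [Ring R] [Algebra K R] (τ : R →ₗ[K] K) : Prop :=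
  ∀ x y : R, τ (x * y) = τ (y * x)

/-- The Dynkin automorphism `ψ` of `TL̂_{n+1}(q)`: `g_i ↦ g_{i+1}` cyclically, i.e.
`g_{σ_1} ↦ g_{σ_2} ↦ ⋯ ↦ g_{σ_n} ↦ g_{a_{n+1}} ↦ g_{σ_1}`. -/
def IsDynkin (ψ : TLhat K q n ≃ₐ[K] TLhat K q n) : Prop :=
  ∀ i : Fin (n + 1), ψ (gg K q n i) = gg K q n (i + 1)

/-- `X = g_{σ_n} g_{σ_{n-1}} ⋯ g_{σ_1} g_{a_{n+1}}`. -/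
noncomputable def Xel : TLhat K q n :=
  (List.ofFn fun t : Fin n =>
      gg K q n ⟨n - 1 - (t : ℕ),
        Nat.lt_succ_of_le (le_trans (Nat.sub_le _ _) (Nat.sub_le _ _))⟩).prod *
    gg K q n (Fin.last n)

/-- `Z = g_{σ_{n-1}} g_{σ_{n-2}} ⋯ g_{σ_1} · F_n(t_{a_n})`. -/
noncomputable def Zel [Invertible q] (F : TLhat K q (n - 1) →ₐ[K] TLhat K q n) :
    TLhat K q n :=
  (List.ofFn fun t : Fin (n - 1) =>
      gg K q n ⟨n - 2 - (t : ℕ),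
        Nat.lt_succ_of_le (le_trans (Nat.sub_le _ _) (Nat.sub_le _ _))⟩).prod *
    F (gg K q (n - 1) (Fin.last (n - 1)))

/-- `g_{σ_n} g_{σ_{n-1}} ⋯ g_{σ_i}`, with the convention that it is `1` when `i = n + 1`. -/
noncomputable def tailChain (i : ℕ) : TLhat K q n :=
  (List.ofFn fun t : Fin (n + 1 - i) =>
      gg K q n ⟨n - 1 - (t : ℕ),
        Nat.lt_succ_of_le (le_trans (Nat.sub_le _ _) (Nat.sub_le _ _))⟩).prod

/-- `g_{σ_{i₀}} g_{σ_{i₀ - 1}} ⋯ g_{σ_1}`, with the convention that it is `1` when `i₀ = 0`. -/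
noncomputable def headChain (i₀ : ℕ) (h : i₀ ≤ n) : TLhat K q n :=
  (List.ofFn fun t : Fin i₀ =>
      gg K q n ⟨i₀ - 1 - (t : ℕ),
        Nat.lt_succ_of_le (le_trans (le_trans (Nat.sub_le _ _) (Nat.sub_le _ _)) h)⟩).prod

/-- `TL_n(q)` realized as the subalgebra of `TL̂_{n+1}(q)` generated by `g_{σ_1}, …, g_{σ_n}`. -/
noncomputable def TLsub : Subalgebra K (TLhat K q n) :=
  Algebra.adjoin K (Set.range fun i : Fin n => gg K q n (Fin.castSucc i))

/-- The generator `g_{σ_{i+1}}` as an element of the subalgebra `TL_n(q)`. -/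
noncomputable def sgen (i : Fin n) : TLsub K q n :=
  ⟨gg K q n (Fin.castSucc i), Algebra.subset_adjoin (Set.mem_range_self i)⟩

/-- The inverse `q⁻¹ (g - (q-1))` of `sgen` inside `TL_n(q)`. -/
noncomputable def sgenInv [Invertible q] (i : Fin n) : TLsub K q n :=
  ⅟q • (sgen K q n i - algebraMap K _ (q - 1))

/-- `g_{σ_1} ⋯ g_{σ_{n-1}} g_{σ_n} g_{σ_{n-1}}⁻¹ ⋯ g_{σ_1}⁻¹` in `TL̂_{n+1}(q)`. -/
noncomputable def EnTarget [Invertible q] : TLhat K q n :=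
  (List.ofFn fun t : Fin (n - 1) =>
      gg K q n (Fin.castLE (le_trans (Nat.sub_le n 1) (Nat.le_succ n)) t)).prod *
    gg K q n (sigmaTop n) *
    (List.ofFn fun t : Fin (n - 1) =>
      ggInv K q n ⟨n - 2 - (t : ℕ),
        Nat.lt_succ_of_le (le_trans (Nat.sub_le _ _) (Nat.sub_le _ _))⟩).prod

/-- `E` is the canonical homomorphism `E_n : TL̂_{n+1}(q) → TL_n(q)`, determined by
`g_{σ_i} ↦ g_{σ_i}` for `1 ≤ i ≤ n` and
`g_{a_{n+1}} ↦ g_{σ_1} ⋯ g_{σ_{n-1}} g_{σ_n} g_{σ_{n-1}}⁻¹ ⋯ g_{σ_1}⁻¹`. -/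
def IsE [Invertible q] (E : TLhat K q n →ₐ[K] TLsub K q n) : Prop :=
  (∀ i : Fin n,
    (E (gg K q n (Fin.castSucc i)) : TLhat K q n) = gg K q n (Fin.castSucc i)) ∧
  (E (gg K q n (Fin.last n)) : TLhat K q n) = EnTarget K q n

section AuxLemmas

variable {K : Type*} [CommRing K] (q : K) (n : ℕ)

lemma gg_quad (i : Fin (n + 1)) :
    gg K q n i * gg K q n i = (q - 1) • gg K q n i + algebraMap K (TLhat K q n) q := by
  simpa only [gg, map_mul, map_add, map_smul, AlgHom.commutes] using
    RingQuot.mkAlgHom_rel K (ATLRel.quad (K := K) (q := q) (n := n) i)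

lemma gg_comm (i j : Fin (n + 1)) (hi : (i : ℕ) < n) (hj : (j : ℕ) < n)
    (hd : 2 ≤ Nat.dist (i : ℕ) (j : ℕ)) :
    Commute (gg K q n i) (gg K q n j) := by
  have := RingQuot.mkAlgHom_rel K (ATLRel.comm_ss (K := K) (q := q) i j hi hj hd)
  exact (by simpa only [gg, map_mul] using this :
    gg K q n i * gg K q n j = gg K q n j * gg K q n i)

lemma gg_braid (i j : Fin (n + 1)) (hj : (j : ℕ) < n) (hij : (j : ℕ) = (i : ℕ) + 1) :
    gg K q n i * gg K q n j * gg K q n i = gg K q n j * gg K q n i * gg K q n j := by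
  simpa only [gg, map_mul] using
    RingQuot.mkAlgHom_rel K (ATLRel.braid_ss (K := K) (q := q) i j hj hij)

lemma gg_mul_ggInv [Invertible q] (i : Fin (n + 1)) :
    gg K q n i * ggInv K q n i = 1 := by
  rw [ggInv, mul_smul_comm, mul_sub, gg_quad, ← Algebra.commutes (q - 1) (gg K q n i),
    ← Algebra.smul_def, add_sub_cancel_left, Algebra.algebraMap_eq_smul_one, smul_smul,
    invOf_mul_self, one_smul]

lemma gg_commute_ggInv [Invertible q] {i j : Fin (n + 1)}
    (h : Commute (gg K q n i) (gg K q n j)) :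
    Commute (gg K q n i) (ggInv K q n j) := by
  rw [ggInv]
  exact (h.sub_right ((Algebra.commutes (q - 1) (gg K q n i)).symm)).smul_right _

lemma ggInv_mul_gg [Invertible q] (i : Fin (n + 1)) :
    ggInv K q n i * gg K q n i = 1 := by
  have h : Commute (gg K q n i) (ggInv K q n i) :=
    gg_commute_ggInv q n (Commute.refl _)
  rw [← h.eq]; exact gg_mul_ggInv q n i

lemma coe_list_prod_sub {K₀ R : Type*} [CommSemiring K₀] [Semiring R] [Algebra K₀ R]
    {S : Subalgebra K₀ R} (L : List S) :
    ((L.prod : S) : R) = (L.map (fun x : S => (x : R))).prod := by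
  induction L with
  | nil => simp
  | cons a l ih => simp [ih]

lemma aux_alg {R : Type*} [Monoid R] (c p g q' cI gI : R)
    (hcp : c * p = p * c) (hcq : c * q' = q' * c)
    (hb : g * c * g = c * g * c) (hg : g * gI = 1) (hc : c * cI = 1) :
    c * (p * g * c * (gI * q')) * cI = p * g * q' := by
  have key1 : ∀ x : R, c * (g * (c * (gI * x))) = g * (c * x) := by
    intro x
    calc c * (g * (c * (gI * x))) = g * c * g * (gI * x) := by
          simp only [← mul_assoc]; rw [hb]
      _ = g * (c * (g * gI * x)) := by simp only [mul_assoc]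
      _ = g * (c * x) := by rw [hg, one_mul]
  calc c * (p * g * c * (gI * q')) * cI
      = c * (p * (g * (c * (gI * (q' * cI))))) := by simp only [mul_assoc]
    _ = p * (c * (g * (c * (gI * (q' * cI))))) := by rw [← mul_assoc, hcp, mul_assoc]
    _ = p * (g * (c * (q' * cI))) := by rw [key1]
    _ = p * (g * (q' * (c * cI))) := by rw [← mul_assoc c q' cI, hcq, mul_assoc]
    _ = p * g * q' := by rw [hc, mul_one, ← mul_assoc]

lemma two_le_dist {a b : ℕ} (h : b + 2 ≤ a) : 2 ≤ Nat.dist a b := by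
  simp [Nat.dist]; omega

end AuxLemmas

section KeyIdentity

lemma key_identity {K : Type*} [CommRing K] (q : K) [Invertible q] (m : ℕ) :
    gg K q (m+3) ⟨m+2, by omega⟩ * EnTarget K q (m+3) * ggInv K q (m+3) ⟨m+2, by omega⟩ =
      (List.ofFn fun t : Fin (m+1) =>
          gg K q (m+3) ⟨(t : ℕ), lt_trans t.isLt (by omega)⟩).prod *
        gg K q (m+3) ⟨m+1, by omega⟩ *
        (List.ofFn fun t : Fin (m+1) =>
          ggInv K q (m+3) ⟨m - (t : ℕ), lt_of_le_of_lt (Nat.sub_le _ _) (by omega)⟩).prod := by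
  have hcP : ∀ x ∈ (List.ofFn fun t : Fin (m+1) =>
      gg K q (m+3) ⟨(t : ℕ), lt_trans t.isLt (by omega)⟩),
      Commute (gg K q (m+3) ⟨m+2, by omega⟩) x := by
    intro x hx
    rw [List.mem_ofFn] at hx
    obtain ⟨t, rfl⟩ := hx
    exact gg_comm q (m+3) _ _ (by omega : m+2 < m+3)
      (by have := t.isLt; omega : (t : ℕ) < m+3)
      (two_le_dist (by have := t.isLt; omega : (t:ℕ) + 2 ≤ m+2))
  have hcQ : ∀ x ∈ (List.ofFn fun t : Fin (m+1) =>
      ggInv K q (m+3) ⟨m - (t : ℕ), lt_of_le_of_lt (Nat.sub_le _ _) (by omega)⟩),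
      Commute (gg K q (m+3) ⟨m+2, by omega⟩) x := by
    intro x hx
    rw [List.mem_ofFn] at hx
    obtain ⟨t, rfl⟩ := hx
    exact gg_commute_ggInv q (m+3)
      (gg_comm q (m+3) _ _ (by omega : m+2 < m+3)
        (by have := Nat.sub_le m (t:ℕ); omega : m - (t:ℕ) < m+3)
        (two_le_dist (by have := Nat.sub_le m (t:ℕ); omega : (m - (t:ℕ)) + 2 ≤ m+2)))
  have hb : gg K q (m+3) ⟨m+1, by omega⟩ * gg K q (m+3) ⟨m+2, by omega⟩ *
        gg K q (m+3) ⟨m+1, by omega⟩ =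
      gg K q (m+3) ⟨m+2, by omega⟩ * gg K q (m+3) ⟨m+1, by omega⟩ *
        gg K q (m+3) ⟨m+2, by omega⟩ :=
    gg_braid q (m+3) _ _ (by omega : m+2 < m+3) (rfl)
  have hg : gg K q (m+3) ⟨m+1, by omega⟩ * ggInv K q (m+3) ⟨m+1, by omega⟩ = 1 :=
    gg_mul_ggInv q (m+3) _
  have hc : gg K q (m+3) ⟨m+2, by omega⟩ * ggInv K q (m+3) ⟨m+2, by omega⟩ = 1 :=
    gg_mul_ggInv q (m+3) _
  have eP : (List.ofFn fun t : Fin (m+1+1) =>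
        gg K q (m+3) ⟨(t : ℕ), lt_trans t.isLt (by omega)⟩).prod =
      (List.ofFn fun t : Fin (m+1) =>
        gg K q (m+3) ⟨(t : ℕ), lt_trans t.isLt (by omega)⟩).prod *
      gg K q (m+3) ⟨m+1, by omega⟩ := by
    rw [List.ofFn_succ', List.prod_concat]
    rfl
  have eQ : (List.ofFn fun t : Fin (m+1+1) =>
        ggInv K q (m+3) ⟨m+1 - (t : ℕ), lt_of_le_of_lt (Nat.sub_le _ _) (by omega)⟩).prod =
      ggInv K q (m+3) ⟨m+1, by omega⟩ *
      (List.ofFn fun t : Fin (m+1) =>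
        ggInv K q (m+3) ⟨m - (t : ℕ), lt_of_le_of_lt (Nat.sub_le _ _) (by omega)⟩).prod := by
    rw [List.ofFn_succ, List.prod_cons]
    congr 1
    exact congrArg List.prod (congrArg List.ofFn (funext fun t => by
      have : m + 1 - ((t : ℕ) + 1) = m - (t : ℕ) := by omega
      congr 1
      exact Fin.ext this))
  show gg K q (m+3) ⟨m+2, by omega⟩ *
      ((List.ofFn fun t : Fin (m+1+1) =>
          gg K q (m+3) ⟨(t : ℕ), lt_trans t.isLt (by omega)⟩).prod *
        gg K q (m+3) ⟨m+2, by omega⟩ *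
        (List.ofFn fun t : Fin (m+1+1) =>
          ggInv K q (m+3) ⟨m+1 - (t : ℕ), lt_of_le_of_lt (Nat.sub_le _ _) (by omega)⟩).prod) *
      ggInv K q (m+3) ⟨m+2, by omega⟩ = _
  rw [eP, eQ]
  exact aux_alg _ _ _ _ _ _
    (Commute.list_prod_right _ _ hcP).eq
    (Commute.list_prod_right _ _ hcQ).eq
    hb hg hc

end KeyIdentity


/-- for `n ≥ 3` the square formed by the towers commutes:
`E_n ∘ F_n = ι ∘ E_{n-1}`, where `ι : TL_{n-1}(q) → TL_n(q)` is the natural inclusion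
sending `g_{σ_i}` to `g_{σ_i}`. -/
theorem tower_square_commutes
    (K : Type*) [CommRing K] [IsDomain K] [CharZero K]
    (q sq : K) [Invertible q] [Invertible (q + 1)] (hsq : sq * sq = q)
    (n : ℕ) (hn : 3 ≤ n)
    (F : TLhat K q (n - 1) →ₐ[K] TLhat K q n) (hF : IsF K q n F)
    (E : TLhat K q n →ₐ[K] TLsub K q n) (hE : IsE K q n E)
    (E' : TLhat K q (n - 1) →ₐ[K] TLsub K q (n - 1)) (hE' : IsE K q (n - 1) E')
    (incl : TLsub K q (n - 1) →ₐ[K] TLsub K q n)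
    (hincl : ∀ i : Fin (n - 1),
      (incl (sgen K q (n - 1) i) : TLhat K q n) =
        gg K q n (Fin.castSucc (Fin.castLE (Nat.sub_le n 1) i))) :
    ∀ x : TLhat K q (n - 1), E (F x) = incl (E' x) := by
  obtain ⟨m, rfl⟩ : ∃ m, n = m + 3 := ⟨n - 3, by omega⟩
  have hgen : ∀ i : Fin (m + 3 - 1 + 1),
      E (F (gg K q (m + 3 - 1) i)) = incl (E' (gg K q (m + 3 - 1) i)) := by
    intro i
    by_cases hlt : (i : ℕ) < m + 2
    · -- the case of a small generator g_{σ_{i+1}}, i ≤ m+1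
      have j : Fin (m + 3 - 1) := ⟨(i : ℕ), hlt⟩
      have h1 : E' (gg K q (m + 3 - 1) i) =
          sgen K q (m + 3 - 1) (⟨(i : ℕ), hlt⟩ : Fin (m + 3 - 1)) :=
        Subtype.ext (hE'.1 (⟨(i : ℕ), hlt⟩ : Fin (m + 3 - 1)))
      rw [hF.1 i hlt, h1]
      exact Subtype.ext ((hE.1 ⟨(i : ℕ), by omega⟩).trans
        (hincl (⟨(i : ℕ), hlt⟩ : Fin (m + 3 - 1))).symm)
    · -- the affine generator
      have hi : i = Fin.last (m + 3 - 1) := by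
        have := i.isLt
        exact Fin.ext (by simp only [Fin.val_last]; omega)
      subst hi
      -- auxiliary computations
      have hEinv' : ((E (ggInv K q (m+3) (sigmaTop (m+3)))) : TLhat K q (m+3)) =
          ⅟q • ((E (gg K q (m+3) (sigmaTop (m+3))) : TLhat K q (m+3)) -
            algebraMap K (TLhat K q (m+3)) (q - 1)) := by
        rw [ggInv, map_smul E, map_sub E, E.commutes, Subalgebra.coe_smul,
          Subalgebra.coe_sub, Subalgebra.coe_algebraMap]
      have hst : ((E (gg K q (m+3) (sigmaTop (m+3)))) : TLhat K q (m+3)) =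
          gg K q (m+3) (sigmaTop (m+3)) := hE.1 ⟨m+2, by omega⟩
      have hA : E' (gg K q (m + 3 - 1) (Fin.last (m + 3 - 1))) =
          (List.ofFn fun t : Fin (m+1) =>
              sgen K q (m + 3 - 1) ⟨(t : ℕ), lt_trans t.isLt (by omega)⟩).prod *
            sgen K q (m + 3 - 1) ⟨m+1, by omega⟩ *
            (List.ofFn fun t : Fin (m+1) =>
              sgenInv K q (m + 3 - 1)
                ⟨m - (t : ℕ), lt_of_le_of_lt (Nat.sub_le _ _) (by omega)⟩).prod := by
        apply Subtype.ext
        rw [hE'.2, MulMemClass.coe_mul, MulMemClass.coe_mul, coe_list_prod_sub,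
          coe_list_prod_sub, List.map_ofFn, List.map_ofFn]
        rfl
      have hstep : ∀ j : Fin (m + 3 - 1),
          ((incl (sgenInv K q (m + 3 - 1) j)) : TLhat K q (m+3)) =
            ggInv K q (m+3) (Fin.castSucc (Fin.castLE (Nat.sub_le (m+3) 1) j)) := by
        intro j
        rw [sgenInv, map_smul incl, map_sub incl, incl.commutes, Subalgebra.coe_smul,
          Subalgebra.coe_sub, Subalgebra.coe_algebraMap, hincl, ggInv]
      have hB : ((incl ((List.ofFn fun t : Fin (m+1) =>
              sgen K q (m + 3 - 1) ⟨(t : ℕ), lt_trans t.isLt (by omega)⟩).prod *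
            sgen K q (m + 3 - 1) ⟨m+1, by omega⟩ *
            (List.ofFn fun t : Fin (m+1) =>
              sgenInv K q (m + 3 - 1)
                ⟨m - (t : ℕ), lt_of_le_of_lt (Nat.sub_le _ _) (by omega)⟩).prod)) :
          TLhat K q (m+3)) =
          (List.ofFn fun t : Fin (m+1) =>
              gg K q (m+3) ⟨(t : ℕ), lt_trans t.isLt (by omega)⟩).prod *
            gg K q (m+3) ⟨m+1, by omega⟩ *
            (List.ofFn fun t : Fin (m+1) =>
              ggInv K q (m+3)
                ⟨m - (t : ℕ), lt_of_le_of_lt (Nat.sub_le _ _) (by omega)⟩).prod := by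
        rw [map_mul incl, map_mul incl, map_list_prod incl, map_list_prod incl,
          List.map_ofFn, List.map_ofFn,
          MulMemClass.coe_mul, MulMemClass.coe_mul, coe_list_prod_sub, coe_list_prod_sub,
          List.map_ofFn, List.map_ofFn]
        simp only [Function.comp_def, hincl, hstep]
        rfl
      apply Subtype.ext
      rw [hF.2, map_mul E, map_mul E, MulMemClass.coe_mul, MulMemClass.coe_mul, hEinv',
        hst, hE.2, hA, hB]
      exact key_identity q m
  have hcomp : E.comp F = incl.comp E' := by
    apply RingQuot.ringQuot_ext'
    apply FreeAlgebra.hom_ext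
    funext i
    simpa only [Function.comp_apply, AlgHom.coe_comp, AlgHom.comp_apply, gg] using hgen i
  intro x
  calc E (F x) = (E.comp F) x := rfl
    _ = (incl.comp E') x := by rw [hcomp]
    _ = incl (E' x) := rfl
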